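/- Let G be a nontrivial finite CLT group and let p be the smallest prime dividing |G|. Then p divides the index [G : G'] of the commutator subgroup G' in G. -/

import Mathlib

/-- A finite group `G` is a CLT group (Converse of Lagrange's Theorem) if for every
divisor `d` of `|G|` there exists a subgroup of `G` of order `d`. -/
def IsCLT (G : Type*) [Group G] : Prop :=
  ∀ d : ℕ, d ∣ Nat.card G → ∃ H : Subgroup G, Nat.card H = d

lemma aux_normal_of_index_minFac {G : Type*} [Group G] [Finite G] [Nontrivial G]
    (H : Subgroup G) (h : H.index = (Nat.card G).minFac) : H.Normal := by
  set p := (Nat.card G).minFac with hp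
  have hcard : 1 < Nat.card G := Finite.one_lt_card
  have hpp : p.Prime := Nat.minFac_prime (by omega)
  set K := H.normalCore with hK
  have hKH : K ≤ H := H.normalCore_le
  have hker : K = (MulAction.toPermHom G (G ⧸ H)).ker := H.normalCore_eq_ker
  -- K.index divides p!
  have hdvd : K.index ∣ Nat.factorial p := by
    classical
    have : Fintype (G ⧸ H) := Fintype.ofFinite _
    rw [hker, Subgroup.index_ker]
    have h1 : Nat.card (MulAction.toPermHom G (G ⧸ H)).range ∣
        Nat.card (Equiv.Perm (G ⧸ H)) := Subgroup.card_subgroup_dvd_card _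
    have hq : Nat.card (G ⧸ H) = p := by rw [← Subgroup.index_eq_card]; exact h
    have h2 : Nat.card (Equiv.Perm (G ⧸ H)) = Nat.factorial p := by
      rw [Nat.card_eq_fintype_card, Fintype.card_perm, ← Nat.card_eq_fintype_card, hq]
    rwa [h2] at h1
  set m := K.relIndex H with hm
  have hrel : m * p = K.index := by rw [← h]; exact Subgroup.relIndex_mul_index hKH
  have hfac : p * Nat.factorial (p - 1) = Nat.factorial p := Nat.mul_factorial_pred hpp.pos.ne'
  have hmdvd : m ∣ Nat.factorial (p - 1) := by
    have h3 : m * p ∣ p * Nat.factorial (p - 1) := by rw [hfac, hrel]; exact hdvd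
    rw [mul_comm m p] at h3
    exact (mul_dvd_mul_iff_left hpp.pos.ne').mp h3
  have hm1 : m = 1 := by
    by_contra hne
    have hidx0 : K.index ≠ 0 := K.index_ne_zero_of_finite
    have hm0 : m ≠ 0 := by intro h0; rw [h0, zero_mul] at hrel; exact hidx0 hrel.symm
    obtain ⟨q, hq, hqm⟩ := Nat.exists_prime_and_dvd hne
    have hqG : q ∣ Nat.card G := by
      have h1 : q ∣ K.index := hqm.trans ⟨p, hrel.symm⟩
      exact h1.trans K.index_dvd_card
    have hpq : p ≤ q := Nat.minFac_le_of_dvd hq.two_le hqG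
    have hqle : q ≤ p - 1 := (Nat.Prime.dvd_factorial hq).mp (hqm.trans hmdvd)
    have := hpp.two_le
    omega
  have : H ≤ K := Subgroup.relIndex_eq_one.mp hm1
  have hHK : K = H := le_antisymm hKH this
  rw [← hHK]
  exact H.normalCore_normal

/-- Theorem 8.6(b): the index of the commutator subgroup of a nontrivial finite CLT group
is divisible by the smallest prime dividing the group order. -/
theorem minFac_dvd_commutator_index_of_CLT (G : Type*) [Group G] [Finite G]
    (hG : Nontrivial G) (hclt : IsCLT G) :
    (Nat.card G).minFac ∣ (commutator G).index := by
  set n := Nat.card G with hn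
  set p := n.minFac with hp
  have hcard : 1 < n := Finite.one_lt_card
  have hpp : p.Prime := Nat.minFac_prime (by omega)
  have hpn : p ∣ n := Nat.minFac_dvd n
  obtain ⟨H, hH⟩ := hclt (n / p) (Nat.div_dvd_of_dvd hpn)
  have hdiv0 : n / p ≠ 0 := (Nat.div_pos (Nat.minFac_le (by omega)) hpp.pos).ne'
  have hidx : H.index = p := by
    have h1 : H.index * (n / p) = n := by rw [← hH]; exact H.index_mul_card
    have h2 : p * (n / p) = n := Nat.mul_div_cancel' hpn
    exact Nat.eq_of_mul_eq_mul_right (Nat.pos_of_ne_zero hdiv0) (h1.trans h2.symm)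
  have hnormal : H.Normal := aux_normal_of_index_minFac H hidx
  have hcardQ : Nat.card (G ⧸ H) = p := by
    rw [← Subgroup.index_eq_card]; exact hidx
  haveI : Fact p.Prime := ⟨hpp⟩
  haveI : IsCyclic (G ⧸ H) := isCyclic_of_prime_card hcardQ
  letI : CommGroup (G ⧸ H) := IsCyclic.commGroup
  have hcomm : commutator G ≤ H := by
    have := Abelianization.commutator_subset_ker (QuotientGroup.mk' H)
    rwa [QuotientGroup.ker_mk'] at this
  rw [← hidx]
  exact Subgroup.index_dvd_of_le hcomm
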